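/- There exist infinitely many primes p such that the multiplicative order of −2 modulo p is congruent to 0 modulo 4. -/

import Mathlib

lemma four_dvd_order_of_neg_two {p : ℕ} (hp : p.Prime) (h8 : p % 8 = 5) :
    4 ∣ orderOf (-2 : ZMod p) := by
  haveI : Fact p.Prime := ⟨hp⟩
  have hp2 : p ≠ 2 := by omega
  have hne : (-2 : ZMod p) ≠ 0 := by
    intro h
    rw [neg_eq_zero, show (2 : ZMod p) = ((2 : ℕ) : ZMod p) by norm_num,
      ZMod.natCast_eq_zero_iff] at h
    have := Nat.le_of_dvd (by norm_num) h
    omega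
  have hnotsq : ¬ IsSquare (-2 : ZMod p) := by
    rw [ZMod.exists_sq_eq_neg_two_iff hp2]
    omega
  have hpow : (-2 : ZMod p) ^ (p / 2) ≠ 1 := by
    intro h
    exact hnotsq ((ZMod.euler_criterion p hne).mpr h)
  have hdvd : orderOf (-2 : ZMod p) ∣ p - 1 :=
    orderOf_dvd_of_pow_eq_one (ZMod.pow_card_sub_one_eq_one hne)
  have hndvd : ¬ orderOf (-2 : ZMod p) ∣ p / 2 := by
    intro h
    exact hpow (orderOf_dvd_iff_pow_eq_one.mp h)
  set d := orderOf (-2 : ZMod p) with hd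
  set u := 2 * (p / 8) + 1 with hu
  have h1 : p - 1 = 4 * u := by omega
  have h2 : p / 2 = 2 * u := by omega
  rw [h1] at hdvd
  rw [h2] at hndvd
  obtain ⟨t, ht⟩ := hdvd
  have htodd : Odd t := by
    rcases Nat.even_or_odd t with he | ho
    · obtain ⟨s, hs⟩ := he
      exfalso
      apply hndvd
      refine ⟨s, ?_⟩
      have h4 : 4 * u = 2 * (d * s) := by rw [ht, hs]; ring
      omega
    · exact ho
  have hcop : Nat.Coprime 4 t := by
    have := (Nat.coprime_two_left.mpr htodd).pow_left 2
    simpa using this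
  exact hcop.dvd_of_dvd_mul_right ⟨u, by omega⟩

theorem stmt5 :
    {p : ℕ | p.Prime ∧ Odd p ∧ orderOf (-2 : ZMod p) % 4 = 0}.Infinite := by
  have hunit : IsUnit (5 : ZMod 8) := by decide
  have := Nat.infinite_setOfPred_prime_and_eq_mod hunit
  apply this.mono
  rintro p ⟨hp, hcast⟩
  have h8 : p % 8 = 5 := by
    have : ((p : ZMod 8)).val = p % 8 := ZMod.val_natCast 8 p
    rw [hcast] at this
    exact this.symm
  refine ⟨hp, ⟨p / 2, by omega⟩, ?_⟩
  obtain ⟨c, hc⟩ := four_dvd_order_of_neg_two hp h8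
  rw [hc]
  simp [Nat.mul_mod_right]
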